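/- Let a, x₅, y₅ ∈ ℝ³. Define c = (a₁(a₂−a₃), a₂(a₃−a₁), a₃(a₁−a₂)) ∈ ℝ³ and d = (a₁·y₅,₁·(a₂x₅,₃ − a₃x₅,₂), a₂·y₅,₂·(a₃x₅,₁ − a₁x₅,₃), a₃·y₅,₃·(a₁x₅,₂ − a₂x₅,₁)) ∈ ℝ³, set v = c × d and b = (v₂v₃, v₁v₃, v₁v₂) ∈ ℝ³, and set F = diag(a)·[a⊙b]_×·diag(b). Then the following polynomial identities hold: F·a = 0, Fᵀ·b = 0, eᵢᵀ·F·eᵢ = 0 for i = 1, 2, 3, e₄ᵀ·F·e₄ = 0, and y₅ᵀ·F·x₅ = 0. -/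
import Mathlib


open Matrix

/-- The cross product on ℝ³. -/
def cross3 (u v : Fin 3 → ℝ) : Fin 3 → ℝ :=
  ![u 1 * v 2 - u 2 * v 1, u 2 * v 0 - u 0 * v 2, u 0 * v 1 - u 1 * v 0]

/-- The 3×3 skew-symmetric matrix `[v]ₓ` of the cross product: `[v]ₓ · u = v × u`. -/
def crossMat (v : Fin 3 → ℝ) : Matrix (Fin 3) (Fin 3) ℝ :=
  !![0, -v 2, v 1; v 2, 0, -v 0; -v 1, v 0, 0]


private lemma cross3_self (w : Fin 3 → ℝ) : cross3 w w = 0 := by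
  funext i; fin_cases i <;> simp [cross3] <;> ring

private lemma dot_cross_left (u w : Fin 3 → ℝ) : u ⬝ᵥ cross3 u w = 0 := by
  simp [cross3, dotProduct, Fin.sum_univ_three]; ring

private lemma dot_cross_right (u w : Fin 3 → ℝ) : w ⬝ᵥ cross3 u w = 0 := by
  simp [cross3, dotProduct, Fin.sum_univ_three]; ring

private lemma Fmulvec (a b w x : Fin 3 → ℝ) :
    (Matrix.diagonal a * crossMat w * Matrix.diagonal b).mulVec x
      = a * cross3 w (b * x) := by
  funext i; fin_cases i <;>
    simp [cross3, crossMat, Matrix.mulVec, Matrix.mul_apply, dotProduct,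
      Fin.sum_univ_three, Matrix.diagonal] <;> ring

private lemma Ftmulvec (a b w x : Fin 3 → ℝ) :
    (Matrix.diagonal a * crossMat w * Matrix.diagonal b)ᵀ.mulVec x
      = b * cross3 (a * x) w := by
  funext i; fin_cases i <;>
    simp [cross3, crossMat, Matrix.mulVec, Matrix.mul_apply, dotProduct,
      Fin.sum_univ_three, Matrix.diagonal, Matrix.transpose_apply] <;> ring

private lemma Fdiag (a b w : Fin 3 → ℝ) (i : Fin 3) :
    Pi.single i (1 : ℝ) ⬝ᵥ
      (Matrix.diagonal a * crossMat w * Matrix.diagonal b).mulVec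
        (Pi.single i (1 : ℝ)) = 0 := by
  fin_cases i <;>
    simp [crossMat, Matrix.mulVec, Matrix.mul_apply, dotProduct,
      Fin.sum_univ_three, Matrix.diagonal, Pi.single_apply] <;> ring

private lemma Fdot (a b w x y : Fin 3 → ℝ) :
    y ⬝ᵥ (Matrix.diagonal a * crossMat w * Matrix.diagonal b).mulVec x
      = (a * y) ⬝ᵥ cross3 w (b * x) := by
  simp [cross3, crossMat, Matrix.mulVec, Matrix.mul_apply, dotProduct,
    Fin.sum_univ_three, Matrix.diagonal]; ring

private lemma key (a x y v : Fin 3 → ℝ) :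
    (a * y) ⬝ᵥ cross3 (a * ![v 1 * v 2, v 0 * v 2, v 0 * v 1])
        (![v 1 * v 2, v 0 * v 2, v 0 * v 1] * x)
      = (v 0 * v 1 * v 2) *
        (![a 0 * y 0 * (a 1 * x 2 - a 2 * x 1),
           a 1 * y 1 * (a 2 * x 0 - a 0 * x 2),
           a 2 * y 2 * (a 0 * x 1 - a 1 * x 0)] ⬝ᵥ v) := by
  simp [cross3, dotProduct, Fin.sum_univ_three]; ring

private lemma key1 (a v : Fin 3 → ℝ) :
    (a * fun _ => (1:ℝ)) ⬝ᵥ cross3 (a * ![v 1 * v 2, v 0 * v 2, v 0 * v 1])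
        (![v 1 * v 2, v 0 * v 2, v 0 * v 1] * fun _ => (1:ℝ))
      = (v 0 * v 1 * v 2) *
        (![a 0 * (a 1 - a 2), a 1 * (a 2 - a 0), a 2 * (a 0 - a 1)] ⬝ᵥ v) := by
  simp [cross3, dotProduct, Fin.sum_univ_three]; ring

/-- Constructive content of Theorem 22 part (1) (n = 5, standard position):
the second camera center `b` is an explicit polynomial map of the first
center `a` (a degree-5 Cremona transformation), and the pair `(a, b)` admits a
fundamental matrix satisfying all five incidence constraints. -/
theorem five_points_cremona_polynomial_identities (a x₅ y₅ : Fin 3 → ℝ) :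
    let c : Fin 3 → ℝ :=
      ![a 0 * (a 1 - a 2), a 1 * (a 2 - a 0), a 2 * (a 0 - a 1)]
    let d : Fin 3 → ℝ :=
      ![a 0 * y₅ 0 * (a 1 * x₅ 2 - a 2 * x₅ 1),
        a 1 * y₅ 1 * (a 2 * x₅ 0 - a 0 * x₅ 2),
        a 2 * y₅ 2 * (a 0 * x₅ 1 - a 1 * x₅ 0)]
    let v := cross3 c d
    let b : Fin 3 → ℝ := ![v 1 * v 2, v 0 * v 2, v 0 * v 1]
    let F : Matrix (Fin 3) (Fin 3) ℝ :=
      Matrix.diagonal a * crossMat (a * b) * Matrix.diagonal b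
    F.mulVec a = 0 ∧ Fᵀ.mulVec b = 0 ∧
    (∀ i : Fin 3, Pi.single i (1 : ℝ) ⬝ᵥ F.mulVec (Pi.single i (1 : ℝ)) = 0) ∧
    (fun _ : Fin 3 => (1 : ℝ)) ⬝ᵥ F.mulVec (fun _ => (1 : ℝ)) = 0 ∧
    y₅ ⬝ᵥ F.mulVec x₅ = 0 := by
  intro c d v b F
  refine ⟨?_, ?_, ?_, ?_, ?_⟩
  · show (Matrix.diagonal a * crossMat (a * b) * Matrix.diagonal b).mulVec a = 0
    rw [Fmulvec, mul_comm b a, cross3_self, mul_zero]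
  · show (Matrix.diagonal a * crossMat (a * b) * Matrix.diagonal b)ᵀ.mulVec b = 0
    rw [Ftmulvec, cross3_self, mul_zero]
  · intro i
    exact Fdiag a b (a * b) i
  · show (fun _ : Fin 3 => (1:ℝ)) ⬝ᵥ
      (Matrix.diagonal a * crossMat (a * b) * Matrix.diagonal b).mulVec
        (fun _ => (1:ℝ)) = 0
    rw [Fdot]
    show (a * fun _ => (1:ℝ)) ⬝ᵥ cross3 (a * ![v 1 * v 2, v 0 * v 2, v 0 * v 1])
        (![v 1 * v 2, v 0 * v 2, v 0 * v 1] * fun _ => (1:ℝ)) = 0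
    rw [key1]
    show v 0 * v 1 * v 2 * (c ⬝ᵥ cross3 c d) = 0
    rw [dot_cross_left, mul_zero]
  · show y₅ ⬝ᵥ
      (Matrix.diagonal a * crossMat (a * b) * Matrix.diagonal b).mulVec x₅ = 0
    rw [Fdot]
    show (a * y₅) ⬝ᵥ cross3 (a * ![v 1 * v 2, v 0 * v 2, v 0 * v 1])
        (![v 1 * v 2, v 0 * v 2, v 0 * v 1] * x₅) = 0
    rw [key]
    show v 0 * v 1 * v 2 * (d ⬝ᵥ cross3 c d) = 0
    rw [dot_cross_right, mul_zero]
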